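/- Let H be a real Hilbert space, f : H → ℝ strongly quasiconvex with value γ > 0 with minimizer x*, let c > 0 and (c_k) a sequence of reals with c_k ≥ c for all k, and let (x^k) be a sequence in H with x^{k+1} ∈ Prox_{c_k f}(x^k) for all k ∈ ℕ. Then for every k ∈ ℕ and every λ ∈ (0,1]: (1/2)((1−λ)γc − λ)‖x^{k+1} − x*‖² ≤ ‖x^{k+1} − x^k‖ · ‖x^{k+1} − x*‖. -/

import Mathlib

/-- Key estimate relating consecutive iterates of the proximal
point algorithm to the distance to the minimizer. -/
theorem ppa_key_estimate
    {H : Type*} [NormedAddCommGroup H] [InnerProductSpace ℝ H] [CompleteSpace H]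
    (f : H → ℝ) (γ : ℝ) (hγ : 0 < γ)
    (hf : ∀ x y : H, ∀ t ∈ Set.Icc (0 : ℝ) 1,
      f ((1 - t) • x + t • y) ≤ max (f x) (f y) - t * (1 - t) * (γ / 2) * ‖x - y‖ ^ 2)
    (xs : H) (hxs : ∀ y : H, f xs ≤ f y)
    (c : ℝ) (hc : 0 < c) (ck : ℕ → ℝ) (hck : ∀ k, c ≤ ck k)
    (x : ℕ → H)
    (hx : ∀ k : ℕ, ∀ y : H,
      f (x (k + 1)) + (1 / (2 * ck k)) * ‖x (k + 1) - x k‖ ^ 2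
        ≤ f y + (1 / (2 * ck k)) * ‖y - x k‖ ^ 2) :
    ∀ k : ℕ, ∀ t ∈ Set.Ioc (0 : ℝ) 1,
      (1 / 2) * ((1 - t) * γ * c - t) * ‖x (k + 1) - xs‖ ^ 2
        ≤ ‖x (k + 1) - x k‖ * ‖x (k + 1) - xs‖ := by
  intro k t ht
  obtain ⟨ht0, ht1⟩ := ht
  set C := ck k with hCdef
  have hC : 0 < C := lt_of_lt_of_le hc (hck k)
  set a : H := x (k + 1) - x k with ha
  set d : H := x (k + 1) - xs with hd
  set y : H := (1 - t) • x (k + 1) + t • xs with hy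
  have h1 := hx k y
  have h2 := hf (x (k + 1)) xs t ⟨le_of_lt ht0, ht1⟩
  rw [max_eq_left (hxs (x (k + 1)))] at h2
  -- y - x k = a - t • d
  have hyx : y - x k = a - t • d := by
    rw [hy, ha, hd]
    have h1t : (1 - t) • x (k + 1) = x (k + 1) - t • x (k + 1) := by
      rw [sub_smul, one_smul]
    rw [h1t, smul_sub]
    abel
  have hnorm : ‖y - x k‖ ^ 2
      = ‖a‖ ^ 2 - 2 * t * (inner ℝ a d : ℝ) + t ^ 2 * ‖d‖ ^ 2 := by
    rw [hyx, norm_sub_sq_real, real_inner_smul_right, norm_smul,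
      Real.norm_eq_abs, abs_of_pos ht0, mul_pow]
    ring
  rw [hnorm] at h1
  -- combine: t(1-t)(γ/2)‖d‖² ≤ (1/(2C)) * (-2t⟪a,d⟫ + t²‖d‖²)
  have h3 : t * (1 - t) * (γ / 2) * ‖d‖ ^ 2
      ≤ (1 / (2 * C)) * (-(2 * t * (inner ℝ a d : ℝ)) + t ^ 2 * ‖d‖ ^ 2) := by
    nlinarith [h1, h2]
  -- multiply by 2C
  have h4 : t * ((1 - t) * γ * C * ‖d‖ ^ 2)
      ≤ t * (-(2 * (inner ℝ a d : ℝ)) + t * ‖d‖ ^ 2) := by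
    have h2C : (0 : ℝ) < 2 * C := by linarith
    have := mul_le_mul_of_nonneg_left h3 (le_of_lt h2C)
    have hcancel : (2 * C) * ((1 / (2 * C)) * (-(2 * t * (inner ℝ a d : ℝ))
        + t ^ 2 * ‖d‖ ^ 2)) = -(2 * t * (inner ℝ a d : ℝ)) + t ^ 2 * ‖d‖ ^ 2 := by
      field_simp
    rw [hcancel] at this
    nlinarith [this]
  have h5 : (1 - t) * γ * C * ‖d‖ ^ 2 ≤ -(2 * (inner ℝ a d : ℝ)) + t * ‖d‖ ^ 2 :=
    le_of_mul_le_mul_left h4 ht0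
  have hinner : -(inner ℝ a d : ℝ) ≤ ‖a‖ * ‖d‖ := by
    have := abs_real_inner_le_norm a d
    have := neg_abs_le (inner ℝ a d : ℝ)
    linarith
  have hck' : c ≤ C := hck k
  nlinarith [h5, hinner, mul_nonneg (mul_nonneg (mul_nonneg (sub_nonneg.mpr ht1)
    (le_of_lt hγ)) (sq_nonneg ‖d‖)) (sub_nonneg.mpr hck'), sq_nonneg ‖d‖,
    norm_nonneg a, norm_nonneg d]
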